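/- Let L : ℝⁿ → ℝ be differentiable with λ-Lipschitz gradient, Ω ⊆ ℝⁿ a nonempty closed convex set, z ∈ Ω, α > 0, and c > λ + α. Define z⁺ := π_Ω(z − (1/c)∇L(z)). Then L(z⁺) + (α/2)‖z⁺ − z‖² ≤ L(z). (Sufficient decrease of a projected gradient step.) -/

import Mathlib

open scoped InnerProductSpace

/-- Descent lemma for functions with Lipschitz gradient. -/
lemma descent_lemma_aux {n : ℕ}
    (L : EuclideanSpace ℝ (Fin n) → ℝ)
    (L' : EuclideanSpace ℝ (Fin n) → EuclideanSpace ℝ (Fin n))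
    (lam : ℝ) (hlam : 0 ≤ lam)
    (hgrad : ∀ x, HasGradientAt L (L' x) x)
    (hlip : LipschitzWith (Real.toNNReal lam) L')
    (x y : EuclideanSpace ℝ (Fin n)) :
    L y ≤ L x + ⟪L' x, y - x⟫_ℝ + lam / 2 * ‖y - x‖ ^ 2 := by
  set v : EuclideanSpace ℝ (Fin n) := y - x with hv
  set γ : ℝ → EuclideanSpace ℝ (Fin n) := fun t => x + t • v with hγdef
  set f : ℝ → ℝ := fun t => L (γ t) - L x - t * ⟪L' x, v⟫_ℝ with hfdef
  set B : ℝ → ℝ := fun t => lam / 2 * t ^ 2 * ‖v‖ ^ 2 with hBdef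
  have hγ : ∀ t : ℝ, HasDerivAt γ v t := by
    intro t
    simpa [hγdef] using ((hasDerivAt_id t).smul_const v).const_add x
  have hf : ∀ t : ℝ, HasDerivAt f (⟪L' (γ t), v⟫_ℝ - ⟪L' x, v⟫_ℝ) t := by
    intro t
    have h1 : HasDerivAt (fun t => L (γ t)) (⟪L' (γ t), v⟫_ℝ) t := by
      have h := (hgrad (γ t)).hasFDerivAt.comp_hasDerivAt t (hγ t)
      rwa [InnerProductSpace.toDual_apply_apply] at h
    have h2 : HasDerivAt (fun s : ℝ => s * ⟪L' x, v⟫_ℝ) (⟪L' x, v⟫_ℝ) t := by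
      simpa using hasDerivAt_mul_const (⟪L' x, v⟫_ℝ) (x := t)
    exact (h1.sub_const (L x)).sub h2
  have hB : ∀ t : ℝ, HasDerivAt B (lam * t * ‖v‖ ^ 2) t := by
    intro t
    have : HasDerivAt (fun t : ℝ => lam / 2 * t ^ 2 * ‖v‖ ^ 2)
        (lam / 2 * (2 * t) * ‖v‖ ^ 2) t := by
      exact (((hasDerivAt_pow 2 t).const_mul (lam / 2)).mul_const (‖v‖ ^ 2)).congr_deriv
        (by ring)
    simpa [hBdef] using this.congr_deriv (by ring)
  have key : ∀ u ∈ Set.Icc (0:ℝ) 1, f u ≤ B u := by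
    intro u hu
    refine image_le_of_deriv_right_le_deriv_boundary
      (fun t _ => (hf t).continuousAt.continuousWithinAt)
      (fun t _ => (hf t).hasDerivWithinAt) (by simp [hfdef, hγdef, hBdef])
      (fun t _ => (hB t).continuousAt.continuousWithinAt)
      (fun t _ => (hB t).hasDerivWithinAt) ?_ hu
    intro t ht
    have hinner : ⟪L' (γ t), v⟫_ℝ - ⟪L' x, v⟫_ℝ = ⟪L' (γ t) - L' x, v⟫_ℝ := by
      rw [inner_sub_left]
    rw [hinner]
    calc ⟪L' (γ t) - L' x, v⟫_ℝ ≤ ‖L' (γ t) - L' x‖ * ‖v‖ :=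
          real_inner_le_norm _ _
      _ ≤ (lam * (t * ‖v‖)) * ‖v‖ := by
          apply mul_le_mul_of_nonneg_right _ (norm_nonneg v)
          have := hlip.dist_le_mul (γ t) x
          rw [Real.coe_toNNReal lam hlam] at this
          have hdist : dist (γ t) x = t * ‖v‖ := by
            simp [hγdef, dist_eq_norm, norm_smul, abs_of_nonneg ht.1]
          rw [hdist] at this
          simpa [dist_eq_norm] using this
      _ = lam * t * ‖v‖ ^ 2 := by ring
  have h1 := key 1 (by norm_num)
  simp only [hfdef, hBdef, hγdef, one_smul, one_pow, one_mul, mul_one] at h1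
  have hγ1 : x + v = y := by simp [hv]
  rw [hγ1] at h1
  linarith

/-- Sufficient decrease of a projected gradient step: if `∇L` is `lam`-Lipschitz,
`c > lam + α`, `z ∈ Ω` and `z⁺ = π_Ω(z - (1/c)∇L(z))`, then
`L(z⁺) + α/2 ‖z⁺ - z‖² ≤ L(z)`. -/
theorem projected_gradient_sufficient_decrease {n : ℕ}
    (L : EuclideanSpace ℝ (Fin n) → ℝ)
    (L' : EuclideanSpace ℝ (Fin n) → EuclideanSpace ℝ (Fin n))
    (lam α c : ℝ) (hlam : 0 ≤ lam) (hα : 0 < α) (hc : c > lam + α)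
    (hgrad : ∀ x, HasGradientAt L (L' x) x)
    (hlip : LipschitzWith (Real.toNNReal lam) L')
    (Ω : Set (EuclideanSpace ℝ (Fin n))) (hne : Ω.Nonempty) (hcl : IsClosed Ω)
    (hconv : Convex ℝ Ω)
    (z zp : EuclideanSpace ℝ (Fin n)) (hz : z ∈ Ω) (hzp : zp ∈ Ω)
    (hproj : ∀ x ∈ Ω, ‖(z - (1 / c) • L' z) - zp‖ ≤ ‖(z - (1 / c) • L' z) - x‖) :
    L zp + α / 2 * ‖zp - z‖ ^ 2 ≤ L z := by
  have hc0 : 0 < c := by linarith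
  set u := z - (1 / c) • L' z with hu
  haveI : Nonempty ↥Ω := ⟨⟨zp, hzp⟩⟩
  have heq : ‖u - zp‖ = ⨅ w : Ω, ‖u - w‖ := by
    have hbdd : BddBelow (Set.range fun w : Ω => ‖u - ↑w‖) := by
      refine ⟨0, ?_⟩
      rintro _ ⟨w, rfl⟩
      exact norm_nonneg _
    refine le_antisymm (le_ciInf fun w => hproj w w.2) ?_
    exact ciInf_le hbdd ⟨zp, hzp⟩
  have key := (norm_eq_iInf_iff_real_inner_le_zero hconv hzp).1 heq z hz
  -- key : ⟪u - zp, z - zp⟫ ≤ 0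
  have hexp : ⟪u - zp, z - zp⟫_ℝ
      = ‖z - zp‖ ^ 2 - (1 / c) * ⟪L' z, z - zp⟫_ℝ := by
    rw [hu]
    have : z - (1 / c) • L' z - zp = (z - zp) - (1 / c) • L' z := by abel
    rw [this, inner_sub_left, real_inner_smul_left, real_inner_self_eq_norm_sq]
  have hineq : ⟪L' z, zp - z⟫_ℝ ≤ -(c * ‖z - zp‖ ^ 2) := by
    rw [hexp] at key
    have h2 : ‖z - zp‖ ^ 2 ≤ (1 / c) * ⟪L' z, z - zp⟫_ℝ := by linarith
    have h3 : c * ‖z - zp‖ ^ 2 ≤ ⟪L' z, z - zp⟫_ℝ := by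
      have := mul_le_mul_of_nonneg_left h2 hc0.le
      rwa [← mul_assoc, mul_one_div, div_self hc0.ne', one_mul] at this
    have h4 : ⟪L' z, zp - z⟫_ℝ = -⟪L' z, z - zp⟫_ℝ := by
      rw [← inner_neg_right]; congr 1; abel
    linarith
  have hd := descent_lemma_aux L L' lam hlam hgrad hlip z zp
  have hnorm : ‖zp - z‖ = ‖z - zp‖ := norm_sub_rev _ _
  rw [hnorm] at hd ⊢
  nlinarith [sq_nonneg ‖z - zp‖]
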